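/- arXiv:0910.5850 — 3 statements merged into one kernel-verified Lean document; each statement's English description precedes it below -/
import Mathlib

section
/- Let M be an N-function satisfying the Δ₂-condition and such that M(λ)/λ² is nondecreasing on (0,∞). Then the Young-type inequality (M(u)/u²)·v·w ≤ M(u) + M(v) + M(w) holds for all u, v, w > 0; that is, condition (Y) holds with P = Q = M. -/
open MeasureTheory Filter Set

noncomputable section

/-- An `N`-function: a continuous convex function `M : [0,∞) → [0,∞)` with `M(0) = 0`,
`lim_{λ→0} M(λ)/λ = 0` and `lim_{λ→∞} λ/M(λ) = 0`. -/
def IsNFunction (M : ℝ → ℝ) : Prop :=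
  ContinuousOn M (Ici 0) ∧ ConvexOn ℝ (Ici 0) M ∧ M 0 = 0 ∧
  (∀ x ≥ (0:ℝ), 0 ≤ M x) ∧
  Tendsto (fun l => M l / l) (nhdsWithin 0 (Ioi 0)) (nhds 0) ∧
  Tendsto (fun l => l / M l) atTop (nhds 0)

/-- The Δ₂-condition. -/
def Delta2 (M : ℝ → ℝ) : Prop := ∃ c > 0, ∀ l > (0:ℝ), M (2 * l) ≤ c * M l

/-- Remark 2.1(1): if `M` is an `N`-function satisfying the Δ₂-condition with
`M(λ)/λ²` nondecreasing, then the Young-type inequality (Y) holds with `P = Q = M`. -/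
theorem statement8 (M : ℝ → ℝ) (hN : IsNFunction M) (hΔ : Delta2 M)
    (hmono : MonotoneOn (fun l => M l / l ^ 2) (Ioi 0)) :
    ∀ u > (0:ℝ), ∀ v > (0:ℝ), ∀ w > (0:ℝ),
      M u / u ^ 2 * v * w ≤ M u + M v + M w := by
  obtain ⟨_, _, _, hpos, _, _⟩ := hN
  intro u hu v hv w hw
  set m := max u (max v w) with hm
  have hum : u ≤ m := le_max_left _ _
  have hvm : v ≤ m := le_trans (le_max_left _ _) (le_max_right _ _)
  have hwm : w ≤ m := le_trans (le_max_right _ _) (le_max_right _ _)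
  have hmpos : 0 < m := lt_of_lt_of_le hu hum
  have hMu : 0 ≤ M u := hpos u hu.le
  have hMv : 0 ≤ M v := hpos v hv.le
  have hMw : 0 ≤ M w := hpos w hw.le
  have h1 : M u / u ^ 2 ≤ M m / m ^ 2 := hmono hu hmpos hum
  have ha : 0 ≤ M u / u ^ 2 := div_nonneg hMu (by positivity)
  have h2 : M u / u ^ 2 * v * w ≤ M m / m ^ 2 * m * m := by
    apply mul_le_mul _ hwm hw.le
    · exact mul_nonneg (le_trans ha h1) hmpos.le
    · exact mul_le_mul h1 hvm hv.le (le_trans ha h1)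
  have h3 : M m / m ^ 2 * m * m = M m := by
    field_simp
  have h4 : M m ≤ M u + M v + M w := by
    rcases max_cases u (max v w) with ⟨h, _⟩ | ⟨h, _⟩
    · rw [hm, h]; linarith
    · rw [hm, h]
      rcases max_cases v w with ⟨h', _⟩ | ⟨h', _⟩ <;> rw [h'] <;> linarith
  linarith [h2, h3.symm ▸ h2]
end
end

section
/- For every a ∈ ℝ and b > 0, lim_{r→∞} ( ∫_r^∞ x^a·e^{-x^b} dx ) / ( r^{a+1-b}·e^{-r^b} ) = 1/b. -/
open MeasureTheory Filter Set Real

private lemma tendsto_rpow_mul_exp_neg_rpow18 (c b : ℝ) (hb : 0 < b) :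
    Tendsto (fun x : ℝ => x ^ c * Real.exp (-(x ^ b))) atTop (nhds 0) := by
  have h := (tendsto_rpow_mul_exp_neg_mul_atTop_nhds_zero (c / b) 1 one_pos).comp
    (tendsto_rpow_atTop hb)
  refine h.congr' ?_
  filter_upwards [eventually_gt_atTop 0] with x hx
  have hx' : (x ^ b) ^ (c / b) = x ^ c := by
    rw [← Real.rpow_mul hx.le, mul_div_cancel₀ _ hb.ne']
  simp [Function.comp, hx', one_mul]

/-- Asymptotics of the incomplete Gamma-type integral:
`∫_r^∞ x^a e^{-x^b} dx ∼ (1/b)·r^{a+1-b}·e^{-r^b}` as `r → ∞`. -/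
theorem statement18 (a b : ℝ) (hb : 0 < b) :
    Tendsto (fun r : ℝ =>
        (∫ x in Ioi r, x ^ a * Real.exp (-(x ^ b))) /
          (r ^ (a + 1 - b) * Real.exp (-(r ^ b))))
      atTop (nhds (1 / b)) := by
  set f : ℝ → ℝ := fun x => x ^ a * Real.exp (-(x ^ b)) with hf
  have hcont : ∀ x : ℝ, 0 < x → ContinuousAt f x := by
    intro x hx
    exact ((Real.continuousAt_rpow_const x a (Or.inl hx.ne')).mul
      (((Real.continuousAt_rpow_const x b (Or.inl hx.ne')).neg).rexp))
  -- integrability on Ioi 1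
  have hbigO : f =O[atTop] fun x : ℝ => x ^ (-2 : ℝ) := by
    have ht := tendsto_rpow_mul_exp_neg_rpow18 (a + 2) b hb
    have heq : (fun x : ℝ => f x / x ^ (-2 : ℝ)) =ᶠ[atTop]
        fun x : ℝ => x ^ (a + 2) * Real.exp (-(x ^ b)) := by
      filter_upwards [eventually_gt_atTop 0] with x hx
      rw [hf, Real.rpow_add hx]
      field_simp [Real.rpow_neg hx.le]
      rw [Real.rpow_neg hx.le, Real.rpow_two]; field_simp
    exact Asymptotics.isBigO_of_div_tendsto_nhds
      (by filter_upwards [eventually_gt_atTop 0] with x hx h;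
          exact absurd h (by positivity)) 0 (ht.congr' heq.symm)
  have hInt1 : IntegrableOn f (Ioi 1) := by
    have h1 : LocallyIntegrableOn f (Ici 1) := by
      refine (ContinuousOn.locallyIntegrableOn ?_ measurableSet_Ici)
      intro x hx
      exact (hcont x (lt_of_lt_of_le one_pos hx)).continuousWithinAt
    exact (h1.integrableOn_of_isBigO_atTop hbigO
      ⟨Ioi 1, Ioi_mem_atTop 1, integrableOn_Ioi_rpow_of_lt (by norm_num) one_pos⟩).mono
      Ioi_subset_Ici_self le_rfl
  set F : ℝ → ℝ := fun r => (∫ x in Ioi 1, f x) - ∫ x in (1:ℝ)..r, f x with hF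
  have hFeq : (fun r => ∫ x in Ioi r, f x) =ᶠ[atTop] F := by
    filter_upwards [eventually_ge_atTop 1] with r hr
    have hsplit : (∫ x in Ioi 1, f x) = (∫ x in Ioc 1 r, f x) + ∫ x in Ioi r, f x := by
      rw [← setIntegral_union (Ioc_disjoint_Ioi le_rfl) measurableSet_Ioi
        (hInt1.mono Ioc_subset_Ioi_self le_rfl)
        (hInt1.mono (Ioi_subset_Ioi hr) le_rfl), Ioc_union_Ioi_eq_Ioi hr]
    show _ = (∫ x in Ioi 1, f x) - ∫ x in (1:ℝ)..r, f x
    rw [intervalIntegral.integral_of_le hr, hsplit]; ring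
  -- F tends to 0
  have hFtop : Tendsto F atTop (nhds 0) := by
    have := intervalIntegral_tendsto_integral_Ioi 1 hInt1 tendsto_id
    have h0 := (tendsto_const_nhds (x := (∫ x in Ioi 1, f x)) (f := atTop (α := ℝ))).sub this
    simpa using h0
  -- derivative of F
  have hF' : ∀ᶠ r in atTop, HasDerivAt F (-(f r)) r := by
    filter_upwards [eventually_gt_atTop 1] with r hr
    have hrpos : (0:ℝ) < r := by linarith
    have hii : IntervalIntegrable f volume 1 r := by
      rw [intervalIntegrable_iff_integrableOn_Ioc_of_le hr.le]
      exact hInt1.mono Ioc_subset_Ioi_self le_rfl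
    have hmeas := ContinuousAt.stronglyMeasurableAtFilter (μ := volume) isOpen_Ioi
      (fun x hx => hcont x hx) r hrpos
    have h := intervalIntegral.integral_hasDerivAt_right hii hmeas (hcont r hrpos)
    have h5 := (hasDerivAt_const r (∫ x in Ioi 1, f x)).sub h
    simp only [zero_sub] at h5
    exact h5
  -- the denominator
  set G : ℝ → ℝ := fun r => r ^ (a + 1 - b) * Real.exp (-(r ^ b)) with hG
  set G' : ℝ → ℝ := fun r =>
    Real.exp (-(r ^ b)) * (r ^ (a - b) * ((a + 1 - b) - b * r ^ b)) with hG'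
  have hGtop : Tendsto G atTop (nhds 0) := tendsto_rpow_mul_exp_neg_rpow18 _ _ hb
  have hGd : ∀ᶠ r in atTop, HasDerivAt G (G' r) r := by
    filter_upwards [eventually_gt_atTop 0] with r hr
    have h1 : HasDerivAt (fun x : ℝ => x ^ (a + 1 - b)) ((a + 1 - b) * r ^ (a + 1 - b - 1)) r :=
      Real.hasDerivAt_rpow_const (Or.inl hr.ne')
    have h2 : HasDerivAt (fun x : ℝ => x ^ b) (b * r ^ (b - 1)) r :=
      Real.hasDerivAt_rpow_const (Or.inl hr.ne')
    have h3 : HasDerivAt (fun x : ℝ => Real.exp (-(x ^ b)))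
        (Real.exp (-(r ^ b)) * -(b * r ^ (b - 1))) r := (h2.neg).exp
    have h4 := h1.mul h3
    refine h4.congr_deriv ?_
    symm
    rw [hG']
    have e1 : r ^ (a + 1 - b - 1) = r ^ (a - b) := by rw [show a + 1 - b - 1 = a - b by ring]
    have e2 : r ^ (a + 1 - b) * r ^ (b - 1) = r ^ (a - b) * r ^ b := by
      rw [← Real.rpow_add hr, ← Real.rpow_add hr]; norm_num
    rw [e1]
    linear_combination b * Real.exp (-(r ^ b)) * e2
  -- eventual negativity of (a+1-b) - b*r^b
  have hAb : ∀ᶠ r : ℝ in atTop, (a + 1 - b) - b * r ^ b < 0 := by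
    filter_upwards [(tendsto_rpow_atTop hb).eventually_ge_atTop ((|a + 1 - b| + 1) / b)]
      with r hr2
    have h1 : |a + 1 - b| + 1 ≤ b * r ^ b := by
      rw [div_le_iff₀ hb] at hr2; linarith [mul_comm (r ^ b) b]
    have h2 := le_abs_self (a + 1 - b)
    linarith
  have hGne : ∀ᶠ r in atTop, G' r ≠ 0 := by
    filter_upwards [eventually_gt_atTop 0, hAb] with r hr hr2
    have h1 : (0:ℝ) < r ^ (a - b) := Real.rpow_pos_of_pos hr _
    exact mul_ne_zero (Real.exp_ne_zero _) (mul_ne_zero h1.ne' hr2.ne)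
  -- limit of the ratio of derivatives
  have hdiv : Tendsto (fun r => (-(f r)) / G' r) atTop (nhds (1 / b)) := by
    have h0 : Tendsto (fun r : ℝ => (a + 1 - b) * r ^ (-b)) atTop (nhds 0) := by
      simpa using (tendsto_rpow_neg_atTop hb).const_mul (a + 1 - b)
    have h1 : Tendsto (fun r : ℝ => b - (a + 1 - b) * r ^ (-b)) atTop (nhds b) := by
      simpa using tendsto_const_nhds.sub h0
    have hlim : Tendsto (fun r : ℝ => 1 / (b - (a + 1 - b) * r ^ (-b))) atTop (nhds (1 / b)) := by
      exact (tendsto_const_nhds (x := (1:ℝ))).div h1 hb.ne'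
    refine hlim.congr' ?_
    filter_upwards [eventually_gt_atTop 0, hAb] with r hr hr2
    have hexp := Real.exp_ne_zero (-(r ^ b))
    have hab : (0:ℝ) < r ^ (a - b) := Real.rpow_pos_of_pos hr _
    have hrb : (0:ℝ) < r ^ b := Real.rpow_pos_of_pos hr _
    have hrnb : (0:ℝ) < r ^ (-b) := Real.rpow_pos_of_pos hr _
    have e3 : r ^ a = r ^ (a - b) * r ^ b := by
      rw [← Real.rpow_add hr]; norm_num
    have e4 : r ^ (-b) * r ^ b = 1 := by
      rw [← Real.rpow_add hr]; norm_num
    have hd1 : b - (a + 1 - b) * r ^ (-b) ≠ 0 := by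
      have hrw : b - (a + 1 - b) * r ^ (-b) = -(r ^ (-b)) * ((a + 1 - b) - b * r ^ b) := by
        linear_combination (-b) * e4
      rw [hrw]
      exact mul_ne_zero (neg_ne_zero.2 hrnb.ne') hr2.ne
    have hd2 : Real.exp (-(r ^ b)) * (r ^ (a - b) * ((a + 1 - b) - b * r ^ b)) ≠ 0 :=
      mul_ne_zero hexp (mul_ne_zero hab.ne' hr2.ne)
    rw [hG', hf]
    show 1 / (b - (a + 1 - b) * r ^ (-b)) =
      -(r ^ a * Real.exp (-(r ^ b))) /
        (Real.exp (-(r ^ b)) * (r ^ (a - b) * ((a + 1 - b) - b * r ^ b)))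
    rw [div_eq_div_iff hd1 hd2]
    linear_combination (b * Real.exp (-(r ^ b)) - (a + 1 - b) * Real.exp (-(r ^ b)) * r ^ (-b)) * e3
      - (a + 1 - b) * Real.exp (-(r ^ b)) * r ^ (a - b) * e4
  have main := HasDerivAt.lhopital_zero_atTop hF' hGd hGne hFtop hGtop hdiv
  refine main.congr' ?_
  filter_upwards [hFeq] with r h
  rw [← h]
end

section
/- For every a < 1, b > 0 and C > 0, lim_{r→∞} ( ∫_0^r x^{-a}·e^{C·x^b} dx ) / ( e^{C·r^b}·r^{-(a+b-1)} ) = 1/(bC). -/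
open MeasureTheory Filter Set Real

lemma st19_deriv (a b C p : ℝ) (hp : p = -(a + b - 1)) {x : ℝ} (hx : 0 < x) :
    HasDerivAt (fun y : ℝ => y ^ p * Real.exp (C * y ^ b))
      (b * C * (x ^ (-a) * Real.exp (C * x ^ b))
        + p * (x ^ (-a - b) * Real.exp (C * x ^ b))) x := by
  have h1 : HasDerivAt (fun y : ℝ => y ^ p) (p * x ^ (p - 1)) x :=
    Real.hasDerivAt_rpow_const (Or.inl hx.ne')
  have h2 : HasDerivAt (fun y : ℝ => y ^ b) (b * x ^ (b - 1)) x :=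
    Real.hasDerivAt_rpow_const (Or.inl hx.ne')
  have h3 : HasDerivAt (fun y : ℝ => Real.exp (C * y ^ b))
      (Real.exp (C * x ^ b) * (C * (b * x ^ (b - 1)))) x := (h2.const_mul C).exp
  have h4 := h1.mul h3
  convert h4 using 1
  iterate 3 rfl
  rw [show p - 1 = -a - b from by rw [hp]; ring]
  have e2 : x ^ p * x ^ (b - 1) = x ^ (-a) := by
    rw [← Real.rpow_add hx]; congr 1; rw [hp]; ring
  linear_combination (-(Real.exp (C * x ^ b) * C * b)) * e2

lemma st19_contOn (b C c : ℝ) {R r : ℝ} (hR : 0 < R) :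
    ContinuousOn (fun x : ℝ => x ^ c * Real.exp (C * x ^ b)) (Icc R r) := by
  have h1 : ContinuousOn (fun x : ℝ => x ^ c) (Icc R r) :=
    continuousOn_id.rpow_const fun x hx => Or.inl (ne_of_gt (lt_of_lt_of_le hR hx.1))
  have h2 : ContinuousOn (fun x : ℝ => x ^ b) (Icc R r) :=
    continuousOn_id.rpow_const fun x hx => Or.inl (ne_of_gt (lt_of_lt_of_le hR hx.1))
  exact h1.mul (Real.continuous_exp.comp_continuousOn (continuousOn_const.mul h2))

lemma st19_ii (b C c : ℝ) {R r : ℝ} (hR : 0 < R) (hRr : R ≤ r) :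
    IntervalIntegrable (fun x : ℝ => x ^ c * Real.exp (C * x ^ b)) volume R r := by
  apply ContinuousOn.intervalIntegrable
  rw [uIcc_of_le hRr]
  exact st19_contOn b C c hR

lemma st19_ftc (a b C p : ℝ) (hp : p = -(a + b - 1)) {R r : ℝ} (hR : 0 < R) (hRr : R ≤ r) :
    b * C * (∫ x in R..r, x ^ (-a) * Real.exp (C * x ^ b))
      + p * (∫ x in R..r, x ^ (-a - b) * Real.exp (C * x ^ b))
    = r ^ p * Real.exp (C * r ^ b) - R ^ p * Real.exp (C * R ^ b) := by
  rw [← intervalIntegral.integral_const_mul, ← intervalIntegral.integral_const_mul,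
    ← intervalIntegral.integral_add ((st19_ii b C (-a) hR hRr).const_mul _)
      ((st19_ii b C (-a - b) hR hRr).const_mul _)]
  apply intervalIntegral.integral_eq_sub_of_hasDerivAt
  · intro x hx
    rw [uIcc_of_le hRr] at hx
    exact st19_deriv a b C p hp (lt_of_lt_of_le hR hx.1)
  · exact ((st19_ii b C (-a) hR hRr).const_mul _).add ((st19_ii b C (-a - b) hR hRr).const_mul _)

lemma st19_Gtop (b C p : ℝ) (hb : 0 < b) (hC : 0 < C) :
    Tendsto (fun r : ℝ => Real.exp (C * r ^ b) * r ^ p) atTop atTop := by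
  have h1 : Tendsto (fun z : ℝ => Real.exp z / z ^ (-(p / b))) atTop atTop :=
    tendsto_exp_div_rpow_atTop _
  have h2 : Tendsto (fun r : ℝ => C * r ^ b) atTop atTop :=
    (tendsto_rpow_atTop hb).const_mul_atTop hC
  have h3 := (h1.comp h2).atTop_mul_const (show (0:ℝ) < C ^ (-(p / b)) by positivity)
  apply h3.congr'
  filter_upwards [eventually_gt_atTop 0] with r hr
  have hrb : (0:ℝ) < r ^ b := Real.rpow_pos_of_pos hr b
  have e1 : (C * r ^ b) ^ (-(p / b)) = C ^ (-(p / b)) * (r ^ b) ^ (-(p / b)) :=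
    Real.mul_rpow hC.le hrb.le
  have e2 : (r ^ b) ^ (-(p / b)) = r ^ (-p) := by
    rw [← Real.rpow_mul hr.le]
    congr 1
    field_simp
  have hrp : (0:ℝ) < r ^ p := Real.rpow_pos_of_pos hr p
  have hCq : (0:ℝ) < C ^ (-(p / b)) := Real.rpow_pos_of_pos hC _
  simp only [Function.comp]
  rw [e1, e2, Real.rpow_neg hr.le]
  rw [Real.rpow_neg hr.le] at e2
  field_simp

lemma st19_ii0 (a b C : ℝ) (ha : a < 1) (hb : 0 < b) (hC : 0 < C) {r : ℝ} (hr : 0 ≤ r) :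
    IntervalIntegrable (fun x : ℝ => x ^ (-a) * Real.exp (C * x ^ b)) volume 0 r := by
  have hg : IntervalIntegrable (fun x : ℝ => Real.exp (C * r ^ b) * x ^ (-a)) volume 0 r :=
    (intervalIntegral.intervalIntegrable_rpow' (by linarith)).const_mul _
  apply hg.mono_fun'
  · apply Measurable.aestronglyMeasurable
    fun_prop
  · rw [Filter.EventuallyLE, ae_restrict_iff' measurableSet_uIoc]
    apply ae_of_all
    intro x hx
    rw [uIoc_of_le hr] at hx
    have hx0 : 0 < x := hx.1
    have hxa : (0:ℝ) ≤ x ^ (-a) := Real.rpow_nonneg hx0.le _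
    have hxb : x ^ b ≤ r ^ b := Real.rpow_le_rpow hx0.le hx.2 hb.le
    have : Real.exp (C * x ^ b) ≤ Real.exp (C * r ^ b) := by
      exact Real.exp_le_exp.2 (by nlinarith [hC.le])
    have h2 : ‖x ^ (-a) * Real.exp (C * x ^ b)‖ = x ^ (-a) * Real.exp (C * x ^ b) := by
      rw [Real.norm_eq_abs, abs_of_nonneg (by positivity)]
    rw [h2]
    calc x ^ (-a) * Real.exp (C * x ^ b) ≤ x ^ (-a) * Real.exp (C * r ^ b) := by
          exact mul_le_mul_of_nonneg_left this hxa
      _ = Real.exp (C * r ^ b) * x ^ (-a) := by ring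

lemma st19_est (a b C : ℝ) (ha : a < 1) (hb : 0 < b) (hC : 0 < C) {R r : ℝ}
    (hR : 0 < R) (hRr : R ≤ r) :
    |b * C * (∫ x in Ioo (0:ℝ) r, x ^ (-a) * Real.exp (C * x ^ b))
        - Real.exp (C * r ^ b) * r ^ (-(a + b - 1))|
      ≤ |b * C * (∫ x in Ioo (0:ℝ) R, x ^ (-a) * Real.exp (C * x ^ b))
          - Real.exp (C * R ^ b) * R ^ (-(a + b - 1))|
        + |-(a + b - 1)| * R ^ (-b) * (∫ x in Ioo (0:ℝ) r, x ^ (-a) * Real.exp (C * x ^ b)) := by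
  set p : ℝ := -(a + b - 1) with hp
  have hr0 : 0 < r := lt_of_lt_of_le hR hRr
  set Fr : ℝ := ∫ x in Ioo (0:ℝ) r, x ^ (-a) * Real.exp (C * x ^ b) with hFr
  set FR : ℝ := ∫ x in Ioo (0:ℝ) R, x ^ (-a) * Real.exp (C * x ^ b) with hFR
  set Irr : ℝ := ∫ x in R..r, x ^ (-a) * Real.exp (C * x ^ b) with hIrr
  set J : ℝ := ∫ x in R..r, x ^ (-a - b) * Real.exp (C * x ^ b) with hJ
  have hFR0 : 0 ≤ FR := setIntegral_nonneg measurableSet_Ioo fun x hx =>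
    mul_nonneg (Real.rpow_nonneg hx.1.le _) (Real.exp_nonneg _)
  have hsplit : Fr = FR + Irr := by
    rw [hFr, hFR, hIrr, ← integral_Ioc_eq_integral_Ioo, ← integral_Ioc_eq_integral_Ioo,
      ← intervalIntegral.integral_of_le hr0.le, ← intervalIntegral.integral_of_le hR.le,
      ← intervalIntegral.integral_add_adjacent_intervals (st19_ii0 a b C ha hb hC hR.le)
        (st19_ii b C (-a) hR hRr)]
  have hftc := st19_ftc a b C p hp hR hRr
  have hJ0 : 0 ≤ J := intervalIntegral.integral_nonneg hRr fun x hx =>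
    mul_nonneg (Real.rpow_nonneg (lt_of_lt_of_le hR hx.1).le _) (Real.exp_nonneg _)
  have hIrr0 : 0 ≤ Irr := intervalIntegral.integral_nonneg hRr fun x hx =>
    mul_nonneg (Real.rpow_nonneg (lt_of_lt_of_le hR hx.1).le _) (Real.exp_nonneg _)
  have hJle : J ≤ R ^ (-b) * Irr := by
    rw [hJ, hIrr, ← intervalIntegral.integral_const_mul]
    apply intervalIntegral.integral_mono_on hRr (st19_ii b C (-a - b) hR hRr)
      ((st19_ii b C (-a) hR hRr).const_mul _)
    intro x hx
    have hx0 : 0 < x := lt_of_lt_of_le hR hx.1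
    have e : x ^ (-a - b) = x ^ (-b) * x ^ (-a) := by
      rw [← Real.rpow_add hx0]; congr 1; ring
    have hxb : x ^ (-b) ≤ R ^ (-b) :=
      Real.rpow_le_rpow_of_nonpos hR hx.1 (neg_nonpos.2 hb.le)
    calc x ^ (-a - b) * Real.exp (C * x ^ b)
        = x ^ (-b) * (x ^ (-a) * Real.exp (C * x ^ b)) := by rw [e]; ring
      _ ≤ R ^ (-b) * (x ^ (-a) * Real.exp (C * x ^ b)) :=
          mul_le_mul_of_nonneg_right hxb
            (mul_nonneg (Real.rpow_nonneg hx0.le _) (Real.exp_nonneg _))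
  have hid : b * C * Fr - Real.exp (C * r ^ b) * r ^ p
      = (b * C * FR - Real.exp (C * R ^ b) * R ^ p) - p * J := by
    rw [hsplit]; linear_combination hftc
  rw [hid]
  calc |(b * C * FR - Real.exp (C * R ^ b) * R ^ p) - p * J|
      ≤ |b * C * FR - Real.exp (C * R ^ b) * R ^ p| + |p * J| := abs_sub _ _
    _ ≤ |b * C * FR - Real.exp (C * R ^ b) * R ^ p| + |p| * R ^ (-b) * Fr := by
        have h1 : |p * J| = |p| * J := by rw [abs_mul, abs_of_nonneg hJ0]
        have h2 : J ≤ R ^ (-b) * Fr := by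
          refine hJle.trans ?_
          apply mul_le_mul_of_nonneg_left _ (Real.rpow_nonneg hR.le _)
          linarith [hsplit]
        rw [h1]
        have h3 : |p| * J ≤ |p| * (R ^ (-b) * Fr) :=
          mul_le_mul_of_nonneg_left h2 (abs_nonneg _)
        linarith [h3]

/-- Asymptotics of the growing exponential integral: for `a < 1`, `b, C > 0`,
`∫_0^r x^{-a} e^{C x^b} dx ∼ (1/(bC))·e^{C r^b}·r^{-(a+b-1)}` as `r → ∞`. -/
theorem statement19 (a b C : ℝ) (ha : a < 1) (hb : 0 < b) (hC : 0 < C) :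
    Tendsto (fun r : ℝ =>
        (∫ x in Ioo (0:ℝ) r, x ^ (-a) * Real.exp (C * x ^ b)) /
          (Real.exp (C * r ^ b) * r ^ (-(a + b - 1))))
      atTop (nhds (1 / (b * C))) := by
  set p : ℝ := -(a + b - 1) with hp
  set K : ℝ := b * C with hK
  have hK0 : 0 < K := mul_pos hb hC
  have hGtop : Tendsto (fun r : ℝ => Real.exp (C * r ^ b) * r ^ p) atTop atTop :=
    st19_Gtop b C p hb hC
  rw [Metric.tendsto_nhds]
  intro ε hε
  have h0 : Tendsto (fun R : ℝ => |p| * R ^ (-b)) atTop (nhds 0) := by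
    have := (tendsto_rpow_neg_atTop hb).const_mul |p|
    simpa using this
  obtain ⟨R, hδ1, hδ2, hR1⟩ :=
    ((h0.eventually_lt_const (show (0:ℝ) < K / 2 by positivity)).and
      ((h0.eventually_lt_const (show (0:ℝ) < ε * K ^ 2 / 4 by positivity)).and
        (eventually_ge_atTop (1:ℝ)))).exists
  have hR0 : (0:ℝ) < R := lt_of_lt_of_le zero_lt_one hR1
  set δ : ℝ := |p| * R ^ (-b) with hδ
  have hδ0 : 0 ≤ δ := mul_nonneg (abs_nonneg _) (Real.rpow_nonneg hR0.le _)
  set D : ℝ := |K * (∫ x in Ioo (0:ℝ) R, x ^ (-a) * Real.exp (C * x ^ b))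
      - Real.exp (C * R ^ b) * R ^ p| with hD
  have hD0 : 0 ≤ D := abs_nonneg _
  filter_upwards [eventually_ge_atTop R,
    hGtop.eventually_gt_atTop (max ((2 * K * D + 4 * D * δ) / (ε * K ^ 2)) 1)]
    with r hrR hrG
  set Fr : ℝ := ∫ x in Ioo (0:ℝ) r, x ^ (-a) * Real.exp (C * x ^ b) with hFr
  set Gr : ℝ := Real.exp (C * r ^ b) * r ^ p with hGr
  have hGr1 : 1 < Gr := lt_of_le_of_lt (le_max_right _ _) hrG
  have hGr0 : 0 < Gr := lt_trans zero_lt_one hGr1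
  have hM1 : (2 * K * D + 4 * D * δ) / (ε * K ^ 2) < Gr :=
    lt_of_le_of_lt (le_max_left _ _) hrG
  have hM1' : 2 * K * D + 4 * D * δ < Gr * (ε * K ^ 2) :=
    (div_lt_iff₀ (by positivity)).1 hM1
  have hr0 : 0 < r := lt_of_lt_of_le hR0 hrR
  have hFr0 : 0 ≤ Fr := setIntegral_nonneg measurableSet_Ioo fun x hx =>
    mul_nonneg (Real.rpow_nonneg hx.1.le _) (Real.exp_nonneg _)
  have hest := st19_est a b C ha hb hC hR0 hrR
  rw [← hp, ← hK, ← hFr, ← hGr, ← hD, ← hδ] at hest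
  -- hest : |K * Fr - Gr| ≤ D + δ * Fr  (up to assoc)
  have h1 : |K * Fr - Gr| ≤ D + δ * Fr := by
    calc |K * Fr - Gr| ≤ D + |p| * R ^ (-b) * Fr := hest
      _ = D + δ * Fr := by rw [hδ]
  have h2 : K * Fr ≤ 2 * Gr + 2 * D := by
    have ha1 : K * Fr - Gr ≤ D + δ * Fr := le_trans (le_abs_self _) h1
    have ha2 : δ * Fr ≤ (K / 2) * Fr := mul_le_mul_of_nonneg_right hδ1.le hFr0
    linarith
  have h6 : K * (δ * Fr) ≤ δ * (2 * Gr + 2 * D) := by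
    have := mul_le_mul_of_nonneg_left h2 hδ0
    nlinarith [this]
  have h5 : 4 * δ * Gr < ε * K ^ 2 * Gr := by
    have hδ2' : 4 * δ < ε * K ^ 2 := by linarith
    nlinarith [mul_lt_mul_of_pos_right hδ2' hGr0]
  have hfin : D + δ * Fr < ε * (K * Gr) := by
    rw [← mul_lt_mul_iff_right₀ hK0]
    nlinarith [hM1', h5, h6]
  have heq : Fr / Gr - 1 / K = (K * Fr - Gr) / (K * Gr) := by
    field_simp
  rw [Real.dist_eq, heq, abs_div, abs_of_pos (mul_pos hK0 hGr0),
    div_lt_iff₀ (mul_pos hK0 hGr0)]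
  calc |K * Fr - Gr| ≤ D + δ * Fr := h1
    _ < ε * (K * Gr) := hfin
end
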